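/- Let A be an invertible M-matrix with triplet representation (P, u, v), so Au = v with u > 0, v ≥ 0. Then the principal square root A^{1/2} satisfies A^{1/2}u = A^{-1/2}v ≥ 0; hence A^{1/2} admits the triplet representation (−offdiag(A^{1/2}), u, A^{-1/2}v). -/

import Mathlib

open Matrix

noncomputable def toC {n : ℕ} (A : Matrix (Fin n) (Fin n) ℝ) : Matrix (Fin n) (Fin n) ℂ :=
  A.map (fun x => (x : ℂ))

def IsEig {n : ℕ} (A : Matrix (Fin n) (Fin n) ℂ) (μ : ℂ) : Prop :=
  ∃ v : Fin n → ℂ, v ≠ 0 ∧ A *ᵥ v = μ • v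

noncomputable def specRad {n : ℕ} (B : Matrix (Fin n) (Fin n) ℝ) : ℝ :=
  sSup {r : ℝ | ∃ μ : ℂ, IsEig (toC B) μ ∧ r = ‖μ‖}

def IsMmat {n : ℕ} (A : Matrix (Fin n) (Fin n) ℝ) : Prop :=
  ∃ (α : ℝ) (B : Matrix (Fin n) (Fin n) ℝ),
    (∀ i j, 0 ≤ B i j) ∧ specRad B ≤ α ∧ A = α • (1 : Matrix (Fin n) (Fin n) ℝ) - B

namespace Stmt9Aux

variable {n : ℕ}

section NormStuff

attribute [local instance] Matrix.linftyOpNormedRing Matrix.linftyOpNormedAlgebra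

noncomputable def entryCLM (i j : Fin n) :
    Matrix (Fin n) (Fin n) ℝ →L[ℝ] ℝ :=
  LinearMap.toContinuousLinearMap
    { toFun := fun A => A i j
      map_add' := fun _ _ => rfl
      map_smul' := fun _ _ => rfl }

lemma pow_entry_nonneg (M : Matrix (Fin n) (Fin n) ℝ) (hM : ∀ i j, 0 ≤ M i j) :
    ∀ (k : ℕ) (i j : Fin n), 0 ≤ (M ^ k) i j := by
  intro k
  induction k with
  | zero => intro i j; simp [Matrix.one_apply]; positivity
  | succ m ih =>
    intro i j
    rw [pow_succ, Matrix.mul_apply]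
    exact Finset.sum_nonneg fun l _ => mul_nonneg (ih i l) (hM l j)

lemma neumann (M : Matrix (Fin n) (Fin n) ℝ) (hM : ∀ i j, 0 ≤ M i j) (h : ‖M‖ < 1) :
    ∀ i j, 0 ≤ (1 - M)⁻¹ i j := by
  intro i j
  have hs : HasSum (fun k : ℕ => M ^ k) (Ring.inverse (1 - M)) :=
    hasSum_geom_series_inverse M h
  have hinv : (1 - M)⁻¹ = Ring.inverse (1 - M) := Matrix.nonsing_inv_eq_ringInverse _
  rw [hinv]
  have hs2 : HasSum (fun k : ℕ => (M ^ k) i j) (Ring.inverse (1 - M) i j) :=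
    hs.mapL (entryCLM i j)
  rw [← hs2.tsum_eq]
  exact tsum_nonneg fun k => pow_entry_nonneg M hM k i j

lemma isUnit_det_one_sub (M : Matrix (Fin n) (Fin n) ℝ) (h : ‖M‖ < 1) :
    IsUnit (1 - M).det :=
  (Matrix.isUnit_iff_isUnit_det _).mp (isUnit_one_sub_of_norm_lt_one h)

lemma base (S B : Matrix (Fin n) (Fin n) ℝ) (α : ℝ) (hB : ∀ i j, 0 ≤ B i j)
    (hS : S = α • (1 : Matrix (Fin n) (Fin n) ℝ) - B) :
    ∃ t : ℝ, 0 ≤ t ∧ ∀ i j, 0 ≤ (S + t • (1 : Matrix (Fin n) (Fin n) ℝ))⁻¹ i j := by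
  set t : ℝ := ‖B‖ + 1 + |α| - α with ht
  have hB0 : 0 ≤ ‖B‖ := norm_nonneg _
  have htpos : 0 ≤ t := by
    have : α ≤ |α| := le_abs_self α
    linarith
  set r : ℝ := α + t with hr
  have hrB : ‖B‖ < r := by
    have : 0 ≤ |α| := abs_nonneg α
    simp only [hr, ht]; linarith
  have hrpos : 0 < r := lt_of_le_of_lt hB0 hrB
  set C : Matrix (Fin n) (Fin n) ℝ := r⁻¹ • B with hC
  have hCnn : ∀ i j, 0 ≤ C i j := fun i j => by
    simp only [hC, Matrix.smul_apply, smul_eq_mul]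
    exact mul_nonneg (inv_nonneg.mpr hrpos.le) (hB i j)
  have hCnorm : ‖C‖ < 1 := by
    rw [hC, norm_smul]
    rw [Real.norm_eq_abs, abs_inv, abs_of_pos hrpos]
    rw [inv_mul_lt_iff₀ hrpos, mul_one]
    exact hrB
  have hSrw : S + t • (1 : Matrix (Fin n) (Fin n) ℝ) = r • ((1 : Matrix (Fin n) (Fin n) ℝ) - C) := by
    rw [hS]
    rw [smul_sub, hC, smul_smul, mul_inv_cancel₀ hrpos.ne', one_smul, hr, add_smul]
    abel
  have hCdet : IsUnit ((1 : Matrix (Fin n) (Fin n) ℝ) - C).det := isUnit_det_one_sub C hCnorm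
  have hNinv : (S + t • (1 : Matrix (Fin n) (Fin n) ℝ))⁻¹
      = r⁻¹ • ((1 : Matrix (Fin n) (Fin n) ℝ) - C)⁻¹ := by
    apply Matrix.inv_eq_right_inv
    rw [hSrw, smul_mul_smul_comm, mul_inv_cancel₀ hrpos.ne',
      Matrix.mul_nonsing_inv _ hCdet, one_smul]
  refine ⟨t, htpos, fun i j => ?_⟩
  rw [hNinv]
  simp only [Matrix.smul_apply, smul_eq_mul]
  exact mul_nonneg (inv_nonneg.mpr hrpos.le) (neumann C hCnn hCnorm i j)

lemma step (S : Matrix (Fin n) (Fin n) ℝ)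
    (hinv : ∀ t : ℝ, 0 ≤ t → IsUnit (S + t • (1 : Matrix (Fin n) (Fin n) ℝ)).det)
    (t : ℝ) (ht : 0 ≤ t) (hg : ∀ i j, 0 ≤ (S + t • (1 : Matrix (Fin n) (Fin n) ℝ))⁻¹ i j) :
    ∃ ε : ℝ, 0 < ε ∧ ∀ s : ℝ, 0 ≤ s → t - ε < s → s ≤ t →
      ∀ i j, 0 ≤ (S + s • (1 : Matrix (Fin n) (Fin n) ℝ))⁻¹ i j := by
  set G := (S + t • (1 : Matrix (Fin n) (Fin n) ℝ))⁻¹ with hG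
  set ε : ℝ := (‖G‖ + 1)⁻¹ with hε
  have hGpos : (0:ℝ) < ‖G‖ + 1 := by positivity
  refine ⟨ε, inv_pos.mpr hGpos, fun s hs hst hst' i j => ?_⟩
  set M : Matrix (Fin n) (Fin n) ℝ := (t - s) • G with hM
  have hMnn : ∀ i j, 0 ≤ M i j := fun i j => by
    simp only [hM, Matrix.smul_apply, smul_eq_mul]
    exact mul_nonneg (by linarith) (hg i j)
  have hMnorm : ‖M‖ < 1 := by
    rw [hM, norm_smul, Real.norm_eq_abs, abs_of_nonneg (by linarith : (0:ℝ) ≤ t - s)]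
    have h1 : t - s < ε := by linarith
    calc (t - s) * ‖G‖ ≤ (t - s) * (‖G‖ + 1) := by
          apply mul_le_mul_of_nonneg_left (by linarith) (by linarith)
      _ < ε * (‖G‖ + 1) := by
          apply mul_lt_mul_of_pos_right h1 hGpos
      _ = 1 := inv_mul_cancel₀ hGpos.ne'
  have key : S + s • (1 : Matrix (Fin n) (Fin n) ℝ)
      = (S + t • (1 : Matrix (Fin n) (Fin n) ℝ)) * ((1 : Matrix (Fin n) (Fin n) ℝ) - M) := by
    rw [mul_sub, mul_one, hM, Matrix.mul_smul, hG, Matrix.mul_nonsing_inv _ (hinv t ht),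
      sub_smul]
    abel
  have hsinv : (S + s • (1 : Matrix (Fin n) (Fin n) ℝ))⁻¹
      = ((1 : Matrix (Fin n) (Fin n) ℝ) - M)⁻¹ * G := by
    rw [key, Matrix.mul_inv_rev]
  rw [hsinv, Matrix.mul_apply]
  exact Finset.sum_nonneg fun l _ =>
    mul_nonneg (neumann M hMnn hMnorm i l) (hg l j)

end NormStuff



lemma isUnit_shift (S : Matrix (Fin n) (Fin n) ℝ)
    (hSeig : ∀ μ : ℂ, (∃ v : Fin n → ℂ, v ≠ 0 ∧ toC S *ᵥ v = μ • v) → 0 < μ.re)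
    (t : ℝ) (ht : 0 ≤ t) :
    IsUnit (S + t • (1 : Matrix (Fin n) (Fin n) ℝ)).det := by
  rw [isUnit_iff_ne_zero]
  intro hdet
  obtain ⟨w, hw0, hww⟩ := (Matrix.exists_mulVec_eq_zero_iff).mpr hdet
  have hSw : S *ᵥ w = -(t • w) := by
    have : S *ᵥ w + t • w = 0 := by
      have h1 : (S + t • (1 : Matrix (Fin n) (Fin n) ℝ)) *ᵥ w
          = S *ᵥ w + t • w := by
        rw [Matrix.add_mulVec, Matrix.smul_mulVec, Matrix.one_mulVec]
      rw [← h1, hww]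
    linear_combination (norm := module) this
  set w' : Fin n → ℂ := fun i => (w i : ℂ) with hw'
  have hw'0 : w' ≠ 0 := by
    intro h
    apply hw0
    funext i
    have := congrFun h i
    simpa [hw'] using this
  have heig : toC S *ᵥ w' = ((-t : ℝ) : ℂ) • w' := by
    funext i
    have hrow : ∑ j, S i j * w j = -(t * w i) := by
      have := congrFun hSw i
      simpa [Matrix.mulVec, dotProduct] using this
    simp only [Matrix.mulVec, dotProduct, toC, Matrix.map_apply, Pi.smul_apply,
      smul_eq_mul, hw']
    calc ∑ x, ((S i x : ℂ)) * ((w x : ℂ))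
        = ((∑ x, S i x * w x : ℝ) : ℂ) := by push_cast; ring
      _ = _ := by rw [hrow]; push_cast; ring
  have := hSeig ((-t : ℝ) : ℂ) ⟨w', hw'0, heig⟩
  simp at this
  linarith

lemma entry_equiv (S : Matrix (Fin n) (Fin n) ℝ) (hd : S.det ≠ 0) (i j : Fin n) :
    (0 ≤ S⁻¹ i j) ↔ 0 ≤ S.adjugate i j * S.det := by
  have hsq : 0 < S.det ^ 2 :=
    lt_of_le_of_ne (sq_nonneg _) (Ne.symm (pow_ne_zero 2 hd))
  have hEq : S.adjugate i j * S.det = S.det ^ 2 * (S⁻¹ i j) := by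
    rw [Matrix.inv_def, Ring.inverse_eq_inv, Matrix.smul_apply, smul_eq_mul]
    field_simp
  rw [hEq]
  exact (mul_nonneg_iff_of_pos_left hsq).symm

lemma inv_nonneg_of_M (S B : Matrix (Fin n) (Fin n) ℝ) (α : ℝ)
    (hB : ∀ i j, 0 ≤ B i j)
    (hSd : S = α • (1 : Matrix (Fin n) (Fin n) ℝ) - B)
    (hSeig : ∀ μ : ℂ, (∃ v : Fin n → ℂ, v ≠ 0 ∧ toC S *ᵥ v = μ • v) → 0 < μ.re) :
    ∀ i j, 0 ≤ S⁻¹ i j := by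
  have hinv : ∀ t : ℝ, 0 ≤ t → IsUnit (S + t • (1 : Matrix (Fin n) (Fin n) ℝ)).det :=
    isUnit_shift S hSeig
  have hdet_ne : ∀ t : ℝ, 0 ≤ t → (S + t • (1 : Matrix (Fin n) (Fin n) ℝ)).det ≠ 0 :=
    fun t ht => (hinv t ht).ne_zero
  -- the closed set
  set T : Set ℝ := Set.Ici (0:ℝ) ∩ ⋂ i, ⋂ j, {t : ℝ |
    0 ≤ (S + t • (1 : Matrix (Fin n) (Fin n) ℝ)).adjugate i j
        * (S + t • (1 : Matrix (Fin n) (Fin n) ℝ)).det} with hT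
  have hmem : ∀ t : ℝ, t ∈ T ↔ (0 ≤ t ∧ ∀ i j,
      0 ≤ (S + t • (1 : Matrix (Fin n) (Fin n) ℝ))⁻¹ i j) := by
    intro t
    constructor
    · rintro ⟨ht0, ht⟩
      simp only [Set.mem_iInter, Set.mem_setOf_eq] at ht
      exact ⟨ht0, fun i j => (entry_equiv _ (hdet_ne t ht0) i j).mpr (ht i j)⟩
    · rintro ⟨ht0, ht⟩
      refine ⟨ht0, ?_⟩
      simp only [Set.mem_iInter, Set.mem_setOf_eq]
      exact fun i j => (entry_equiv _ (hdet_ne t ht0) i j).mp (ht i j)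
  have hcontM : Continuous fun t : ℝ => S + t • (1 : Matrix (Fin n) (Fin n) ℝ) :=
    continuous_const.add (continuous_id.smul continuous_const)
  have hclosed : IsClosed T := by
    refine IsClosed.inter isClosed_Ici ?_
    refine isClosed_iInter fun i => isClosed_iInter fun j => ?_
    exact isClosed_le continuous_const
      ((hcontM.matrix_adjugate.matrix_elem i j).mul hcontM.matrix_det)
  have hne : T.Nonempty := by
    obtain ⟨t0, ht0, hg⟩ := base S B α hB hSd
    exact ⟨t0, (hmem t0).mpr ⟨ht0, hg⟩⟩
  have hbdd : BddBelow T := ⟨0, fun x hx => hx.1⟩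
  have hcmem : sInf T ∈ T := hclosed.csInf_mem hne hbdd
  obtain ⟨hc0, hcg⟩ := (hmem _).mp hcmem
  set c := sInf T with hc
  have hczero : c = 0 := by
    by_contra hne0
    have hcpos : 0 < c := lt_of_le_of_ne hc0 (Ne.symm hne0)
    obtain ⟨ε, hε, hstep⟩ := step S hinv c hc0 hcg
    set s : ℝ := max 0 (c - ε/2) with hs
    have hs0 : 0 ≤ s := le_max_left _ _
    have hs1 : c - ε < s := lt_of_lt_of_le (by linarith) (le_max_right _ _)
    have hs2 : s ≤ c := max_le hcpos.le (by linarith)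
    have hslt : s < c := max_lt hcpos (by linarith)
    have hsT : s ∈ T := (hmem s).mpr ⟨hs0, hstep s hs0 hs1 hs2⟩
    exact absurd (csInf_le hbdd hsT) (not_le.mpr hslt)
  have := hcg
  rw [hczero] at this
  simpa using this

end Stmt9Aux

/-- For an invertible M-matrix A with triplet (u,v), the principal square root S = A^{1/2}
(the M-matrix square root with spectrum in the open right half plane) satisfies
S u = S⁻¹ v ≥ 0, giving a triplet representation (-offdiag S, u, S⁻¹ v) of S. -/
theorem stmt9 {n : ℕ} (A S : Matrix (Fin n) (Fin n) ℝ) (hA : IsMmat A) (hAinv : IsUnit A)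
    (u v : Fin n → ℝ) (hu : ∀ i, 0 < u i) (hv : ∀ i, 0 ≤ v i) (hAu : A *ᵥ u = v)
    (hSsq : S * S = A) (hSeig : ∀ μ : ℂ, IsEig (toC S) μ → 0 < μ.re)
    (hSM : IsMmat S) :
    S *ᵥ u = S⁻¹ *ᵥ v ∧ ∀ i, 0 ≤ (S⁻¹ *ᵥ v) i := by
  obtain ⟨α, B, hB, -, hSd⟩ := hSM
  have hSinvnn : ∀ i j, 0 ≤ S⁻¹ i j :=
    Stmt9Aux.inv_nonneg_of_M S B α hB hSd (fun μ h => hSeig μ h)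
  have hAdet : IsUnit A.det := (Matrix.isUnit_iff_isUnit_det A).mp hAinv
  have hSdet : IsUnit S.det := by
    rw [← hSsq, Matrix.det_mul] at hAdet
    exact isUnit_of_mul_isUnit_left hAdet
  have heq : S *ᵥ u = S⁻¹ *ᵥ v := by
    rw [← hAu, ← hSsq, Matrix.mulVec_mulVec, ← mul_assoc,
      Matrix.nonsing_inv_mul S hSdet, one_mul]
  refine ⟨heq, fun i => ?_⟩
  simp only [Matrix.mulVec, dotProduct]
  exact Finset.sum_nonneg fun j _ => mul_nonneg (hSinvnn i j) (hv j)
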